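/- Let μ be a probability distribution on [0,1]^d whose one-dimensional marginals have densities bounded by M. There is a universal constant C such that for every c ≥ 1 and every δ > 0 there exists a ReLU network N : ℝ^d → ℝ^{c·d} of size at most C·d·c² such that Pr_{x∼μ}[N(x) = bin_c(x)] ≥ 1 − δ. -/

import Mathlib

open MeasureTheory
open scoped ENNReal

noncomputable section

/-- The ReLU activation. -/
def relu (t : ℝ) : ℝ := max 0 t

/-- A feedforward neural network from `ℝ^n` to `ℝ^q`, given as a sequence of affine
layers; the activation is applied coordinatewise after every affine layer except the
last one. -/
inductive Net : ℕ → ℕ → Type where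
  | last {n q : ℕ} (A : Fin q → Fin n → ℝ) (b : Fin q → ℝ) : Net n q
  | layer {n m q : ℕ} (A : Fin m → Fin n → ℝ) (b : Fin m → ℝ) (rest : Net m q) : Net n q

/-- Evaluation of a network with activation `σ`. -/
def Net.eval (σ : ℝ → ℝ) : {n q : ℕ} → Net n q → (Fin n → ℝ) → Fin q → ℝ
  | _, _, .last A b, x, i => (∑ j, A i j * x j) + b i
  | _, _, .layer A b rest, x, i => rest.eval σ (fun m => σ ((∑ j, A m j * x j) + b m)) i

/-- The size of a network: the total number of neurons. -/
def Net.size : {n q : ℕ} → Net n q → ℕ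
  | _, q, .last _ _ => q
  | _, _, .layer (m := m) _ _ rest => m + rest.size

/-- The `j`-th bit (as a real number) of the `c`-bit binary representation of
`min(⌊2^c t⌋, 2^c − 1)`. -/
def bitRep (c : ℕ) (t : ℝ) (j : Fin c) : ℝ :=
  if (min (⌊(2:ℝ) ^ c * t⌋.toNat) (2 ^ c - 1)).testBit j then 1 else 0

/-- `bin_c(x) ∈ {0,1}^{c·d}`: the concatenation over `i = 1,…,d` of the `c`-bit binary
representations of the integers `min(⌊2^c x_i⌋, 2^c − 1)`. -/
def binc (c d : ℕ) (x : Fin d → ℝ) : Fin (c * d) → ℝ :=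
  fun p => bitRep c (x (finProdFinEquiv.symm p).2) (finProdFinEquiv.symm p).1


/-- the integer extracted from t -/
def kk (c : ℕ) (t : ℝ) : ℕ := min (⌊(2:ℝ) ^ c * t⌋.toNat) (2 ^ c - 1)

/-- the value carried at stage s (0-indexed: s thresholds already consumed) -/
def Tt (c s : ℕ) (t : ℝ) : ℝ := 2 ^ s * t - ((kk c t / 2 ^ (c - s) : ℕ) : ℝ)

/-- goodness of a scalar -/
def Good (c : ℕ) (ε t : ℝ) : Prop :=
  t ∈ Set.Icc (0:ℝ) 1 ∧ ∀ ℓ : ℕ, 1 ≤ ℓ → ℓ ≤ 2 ^ c - 1 → ε ≤ |t - (ℓ : ℝ) / 2 ^ c|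

lemma kk_le (c : ℕ) (t : ℝ) : kk c t ≤ 2 ^ c - 1 := min_le_right _ _

lemma kk_cast_le (c : ℕ) {t : ℝ} (ht : t ∈ Set.Icc (0:ℝ) 1) : (kk c t : ℝ) ≤ 2 ^ c * t := by
  have h0 : (0:ℝ) ≤ 2 ^ c * t := mul_nonneg (by positivity) ht.1
  have : ((⌊(2:ℝ) ^ c * t⌋.toNat : ℤ) : ℝ) ≤ 2 ^ c * t := by
    rw [Int.toNat_of_nonneg (Int.floor_nonneg.2 h0)]
    exact Int.floor_le _
  calc (kk c t : ℝ) ≤ (⌊(2:ℝ) ^ c * t⌋.toNat : ℝ) :=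
        Nat.cast_le.2 (min_le_left _ _)
    _ ≤ 2 ^ c * t := by exact_mod_cast this

lemma le_kk_cast (c : ℕ) {t : ℝ} (ht : t ∈ Set.Icc (0:ℝ) 1) : 2 ^ c * t - 1 ≤ (kk c t : ℝ) := by
  rcases le_or_gt (⌊(2:ℝ) ^ c * t⌋.toNat) (2 ^ c - 1) with h | h
  · have : kk c t = ⌊(2:ℝ) ^ c * t⌋.toNat := min_eq_left h
    rw [this]
    have h0 : (0:ℝ) ≤ 2 ^ c * t := mul_nonneg (by positivity) ht.1
    have := Int.sub_one_lt_floor ((2:ℝ) ^ c * t)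
    have h2 : ((⌊(2:ℝ) ^ c * t⌋.toNat : ℕ) : ℝ) = (⌊(2:ℝ) ^ c * t⌋ : ℝ) := by
      have := Int.toNat_of_nonneg (Int.floor_nonneg.2 h0)
      exact_mod_cast this
    rw [h2]
    linarith
  · have : kk c t = 2 ^ c - 1 := min_eq_right (le_of_lt h)
    rw [this]
    have h1 : (1:ℕ) ≤ 2 ^ c := Nat.one_le_two_pow
    have : ((2 ^ c - 1 : ℕ) : ℝ) = 2 ^ c - 1 := by
      push_cast [h1]; ring
    rw [this]
    nlinarith [ht.2, pow_pos (show (0:ℝ) < 2 by norm_num) c]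

lemma kk_lt_pow (c : ℕ) (t : ℝ) : kk c t < 2 ^ c :=
  lt_of_le_of_lt (kk_le c t) (Nat.sub_lt (Nat.pos_of_ne_zero (by positivity)) one_pos)

lemma Tt_zero (c : ℕ) (hc : 1 ≤ c) (t : ℝ) : Tt c 0 t = t := by
  unfold Tt
  rw [Nat.sub_zero, Nat.div_eq_of_lt (kk_lt_pow c t)]
  push_cast; ring

/-- main: Tt as (e + r)/2^(c-s) -/
lemma Tt_eq (c s : ℕ) (hs : s ≤ c) (t : ℝ) :
    Tt c s t = ((2 ^ c * t - kk c t) + (kk c t % 2 ^ (c - s) : ℕ)) / 2 ^ (c - s) := by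
  have hk : 2 ^ (c-s) * (kk c t / 2 ^ (c-s)) + kk c t % 2 ^ (c-s) = kk c t := Nat.div_add_mod _ _
  have hcast : (2:ℝ) ^ (c-s) * ((kk c t / 2 ^ (c-s) : ℕ) : ℝ) + ((kk c t % 2 ^ (c-s) : ℕ) : ℝ) = kk c t := by
    exact_mod_cast congrArg (Nat.cast (R := ℝ)) hk
  have hpow : (2:ℝ) ^ s * 2 ^ (c - s) = 2 ^ c := by
    rw [← pow_add]; congr 1; omega
  have hpos : (0:ℝ) < 2 ^ (c - s) := by positivity
  rw [eq_div_iff hpos.ne', Tt]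
  linear_combination t * hpow - hcast

/-- the bit extracted at stage s (stages 0..c-1): bit (c-s-1) of kk -/
def bitv (c s : ℕ) (t : ℝ) : ℕ := (kk c t / 2 ^ (c - s - 1)) % 2

lemma e_nonneg (c : ℕ) {t : ℝ} (ht : t ∈ Set.Icc (0:ℝ) 1) : 0 ≤ 2 ^ c * t - kk c t := by
  have := kk_cast_le c ht; linarith

lemma e_le_one (c : ℕ) {t : ℝ} (ht : t ∈ Set.Icc (0:ℝ) 1) : 2 ^ c * t - kk c t ≤ 1 := by
  have := le_kk_cast c ht; linarith

lemma Tt_nonneg (c s : ℕ) (hs : s ≤ c) {t : ℝ} (ht : t ∈ Set.Icc (0:ℝ) 1) :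
    0 ≤ Tt c s t := by
  rw [Tt_eq c s hs]
  have h1 := e_nonneg c ht
  have h2 : (0:ℝ) ≤ ((kk c t % 2 ^ (c-s) : ℕ) : ℝ) := Nat.cast_nonneg _
  positivity

lemma Tt_le_one (c s : ℕ) (hs : s ≤ c) {t : ℝ} (ht : t ∈ Set.Icc (0:ℝ) 1) :
    Tt c s t ≤ 1 := by
  rw [Tt_eq c s hs]
  have h1 := e_le_one c ht
  have h2 : ((kk c t % 2 ^ (c-s) : ℕ) : ℝ) ≤ (2:ℝ) ^ (c-s) - 1 := by
    have : kk c t % 2 ^ (c-s) ≤ 2 ^ (c-s) - 1 := by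
      have := Nat.mod_lt (kk c t) (y := 2 ^ (c-s)) (by positivity); omega
    calc ((kk c t % 2 ^ (c-s) : ℕ) : ℝ) ≤ ((2 ^ (c-s) - 1 : ℕ) : ℝ) := Nat.cast_le.2 this
      _ = (2:ℝ) ^ (c-s) - 1 := by
          have h1 : (1:ℕ) ≤ 2 ^ (c-s) := Nat.one_le_two_pow
          push_cast [h1]; ring
  have hpos : (0:ℝ) < 2 ^ (c-s) := by positivity
  rw [div_le_one hpos]; linarith

lemma Tt_succ (c s : ℕ) (hs : s < c) (t : ℝ) :
    Tt c (s+1) t = 2 * Tt c s t - (bitv c s t : ℝ) := by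
  have hsplit : kk c t / 2 ^ (c - s - 1) = 2 * (kk c t / 2 ^ (c - s)) + bitv c s t := by
    have h1 : (2:ℕ) ^ (c - s) = 2 ^ (c - s - 1) * 2 := by
      rw [← pow_succ]; congr 1; omega
    have h2 : kk c t / 2 ^ (c - s) = kk c t / 2 ^ (c - s - 1) / 2 := by
      rw [h1, Nat.div_div_eq_div_mul]
    rw [h2]; unfold bitv; omega
  have hc1 : c - (s+1) = c - s - 1 := by omega
  unfold Tt
  rw [hc1, hsplit]
  push_cast
  ring

lemma bitv_le (c s : ℕ) (t : ℝ) : bitv c s t ≤ 1 := by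
  unfold bitv; omega

/-- threshold correctness on good inputs -/
lemma Tt_threshold (c s : ℕ) (hs : s < c) {ε t : ℝ} (hε : 0 < ε) (hg : Good c ε t) :
    (bitv c s t = 1 → 1/2 + ε ≤ Tt c s t) ∧ (bitv c s t = 0 → Tt c s t ≤ 1/2 - ε) := by
  obtain ⟨ht, hdist⟩ := hg
  set m : ℕ := kk c t / 2 ^ (c - s) with hm
  set r : ℕ := kk c t % 2 ^ (c - s) with hr
  -- m < 2^s
  have hmlt : m < 2 ^ s := by
    rw [hm]
    apply Nat.div_lt_of_lt_mul
    calc kk c t < 2 ^ c := kk_lt_pow c t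
      _ = 2 ^ (c - s) * 2 ^ s := by rw [← pow_add]; congr 1; omega
  set ℓ : ℕ := (2 * m + 1) * 2 ^ (c - s - 1) with hℓ
  have hℓ1 : 1 ≤ ℓ := by
    rw [hℓ]; have : (1:ℕ) ≤ 2 ^ (c - s - 1) := Nat.one_le_two_pow; nlinarith
  have hℓ2 : ℓ ≤ 2 ^ c - 1 := by
    rw [hℓ]
    have h1 : 2 * m + 1 ≤ 2 ^ (s+1) - 1 := by omega
    have h2 : (2:ℕ) ^ (s+1) * 2 ^ (c - s - 1) = 2 ^ c := by rw [← pow_add]; congr 1; omega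
    have h3 : (1:ℕ) ≤ 2 ^ (c - s - 1) := Nat.one_le_two_pow
    calc (2 * m + 1) * 2 ^ (c-s-1) ≤ (2 ^ (s+1) - 1) * 2 ^ (c-s-1) :=
          Nat.mul_le_mul_right _ h1
      _ = 2 ^ (s+1) * 2 ^ (c-s-1) - 2 ^ (c-s-1) := by rw [Nat.sub_mul]; ring_nf
      _ ≤ 2 ^ c - 1 := by rw [h2]; omega
  have hd := hdist ℓ hℓ1 hℓ2
  -- Tt - 1/2 = 2^s * (t - ℓ/2^c)
  have hkey : Tt c s t - 1/2 = 2 ^ s * (t - (ℓ:ℝ) / 2 ^ c) := by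
    have hc2 : (2:ℝ) ^ (s+1) * 2 ^ (c - s - 1) = 2 ^ c := by rw [← pow_add]; congr 1; omega
    have hℓcast : (ℓ:ℝ) = (2 * m + 1) * 2 ^ (c - s - 1) := by rw [hℓ]; push_cast; ring
    have hpos : (0:ℝ) < 2 ^ c := by positivity
    have hc2' : (2:ℝ) ^ s * 2 ^ (c - s - 1) = 2 ^ c / 2 := by linear_combination hc2 / 2
    have hmain : (2:ℝ) ^ s * ((ℓ:ℝ) / 2 ^ c) = (m:ℝ) + 1/2 := by
      have h5 : (2:ℝ)^s * ((2*(m:ℝ)+1) * 2^(c-s-1)) = ((m:ℝ) + 1/2) * 2^c := by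
        linear_combination (2*(m:ℝ)+1) * hc2'
      calc (2:ℝ)^s * ((ℓ:ℝ)/2^c) = (2^s * ((2*(m:ℝ)+1)*2^(c-s-1)))/2^c := by
            rw [hℓcast]; ring
        _ = (((m:ℝ)+1/2) * 2^c)/2^c := by rw [h5]
        _ = (m:ℝ) + 1/2 := by field_simp
    unfold Tt
    rw [← hm, mul_sub, hmain]
    ring
  have habs : ε ≤ |Tt c s t - 1/2| := by
    rw [hkey, abs_mul, abs_of_nonneg (show (0:ℝ) ≤ 2^s by positivity)]
    calc ε = 1 * ε := (one_mul ε).symm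
      _ ≤ 2 ^ s * |t - (ℓ:ℝ)/2^c| := by
          apply mul_le_mul (one_le_pow₀ (by norm_num)) hd (le_of_lt hε) (by positivity)
  -- sign analysis via Tt_eq
  have hTeq := Tt_eq c s (le_of_lt hs) t
  have hpos2 : (0:ℝ) < 2 ^ (c - s) := by positivity
  have hhalf : (2:ℝ) ^ (c - s - 1) / 2 ^ (c - s) = 1/2 := by
    have : (2:ℝ) ^ (c - s) = 2 ^ (c - s - 1) * 2 := by rw [← pow_succ]; congr 1; omega
    rw [this]; field_simp
  have hbr : r / 2 ^ (c - s - 1) = bitv c s t := by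
    have h1 : (2:ℕ) ^ (c - s) = 2 ^ (c - s - 1) * 2 := by rw [← pow_succ]; congr 1; omega
    rw [hr, h1]
    exact Nat.mod_mul_right_div_self _ _ _
  have he0 := e_nonneg c ht
  have he1 := e_le_one c ht
  constructor
  · intro hb
    have hrge : 2 ^ (c - s - 1) ≤ r := by
      by_contra hcon
      push_neg at hcon
      rw [Nat.div_eq_of_lt hcon] at hbr
      omega
    have hrge' : (2:ℝ) ^ (c - s - 1) ≤ (r:ℝ) := by
      calc (2:ℝ) ^ (c-s-1) = ((2 ^ (c-s-1) : ℕ) : ℝ) := by push_cast; ring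
        _ ≤ (r:ℝ) := Nat.cast_le.2 hrge
    have hsign : 0 ≤ Tt c s t - 1/2 := by
      rw [hTeq, ← hr, ← hhalf]
      rw [div_sub_div_same, le_div_iff₀ hpos2]
      simp only [zero_mul]
      linarith
    have := abs_of_nonneg hsign
    linarith [habs, this.symm ▸ habs]
  · intro hb
    have hrlt : r < 2 ^ (c - s - 1) := by
      by_contra hcon
      push_neg at hcon
      have : 1 ≤ r / 2 ^ (c - s - 1) := (Nat.one_le_div_iff (by positivity)).2 hcon
      omega
    have hrlt' : (r:ℝ) ≤ (2:ℝ) ^ (c - s - 1) - 1 := by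
      have : (r:ℝ) ≤ ((2 ^ (c-s-1) - 1 : ℕ) : ℝ) := Nat.cast_le.2 (by omega)
      have h1 : (1:ℕ) ≤ 2 ^ (c-s-1) := Nat.one_le_two_pow
      calc (r:ℝ) ≤ ((2 ^ (c-s-1) - 1 : ℕ) : ℝ) := this
        _ = (2:ℝ) ^ (c-s-1) - 1 := by push_cast [h1]; ring
    have hsign : Tt c s t - 1/2 ≤ 0 := by
      rw [hTeq, ← hr, ← hhalf]
      rw [div_sub_div_same, div_le_iff₀ hpos2]
      simp only [zero_mul]
      linarith
    have := abs_of_nonpos hsign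
    linarith [habs, this.symm ▸ habs]

-- encoding of state indices
def enc (c d : ℕ) (s : Fin (c+3)) (i : Fin d) : Fin ((c+3)*d) := finProdFinEquiv (s, i)

lemma enc_symm (c d : ℕ) (s : Fin (c+3)) (i : Fin d) :
    finProdFinEquiv.symm (enc c d s i) = (s, i) := Equiv.symm_apply_apply _ _

def ind {n : ℕ} (a : Fin n) : Fin n → ℝ := fun q => if q = a then 1 else 0

lemma sum_ind_mul {n : ℕ} (a : Fin n) (v : Fin n → ℝ) : ∑ q, ind a q * v q = v a := by
  simp [ind, ite_mul]

def Emat (c d : ℕ) : Fin ((c+3)*d) → Fin d → ℝ := fun p i' =>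
  if (finProdFinEquiv.symm p).1.val = 0 then ind (finProdFinEquiv.symm p).2 i' else 0

def Amat (c d : ℕ) (ε : ℝ) : Fin ((c+3)*d) → Fin ((c+3)*d) → ℝ := fun p q =>
  if c + 1 ≤ (finProdFinEquiv.symm p).1.val then
    (1/(2*ε)) * ind (enc c d ⟨0, by omega⟩ (finProdFinEquiv.symm p).2) q
  else ind (enc c d (finProdFinEquiv.symm p).1 (finProdFinEquiv.symm p).2) q

def Abias (c d : ℕ) (ε : ℝ) : Fin ((c+3)*d) → ℝ := fun p =>
  if (finProdFinEquiv.symm p).1.val = c + 1 then (ε - 1/2)/(2*ε)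
  else if (finProdFinEquiv.symm p).1.val = c + 2 then (ε - 1/2)/(2*ε) - 1
  else 0

def Bmat (c d j : ℕ) : Fin ((c+3)*d) → Fin ((c+3)*d) → ℝ := fun p q =>
  let i := (finProdFinEquiv.symm p).2
  if (finProdFinEquiv.symm p).1.val = 0 then
    2 * ind (enc c d ⟨0, by omega⟩ i) q - ind (enc c d ⟨c+1, by omega⟩ i) q
      + ind (enc c d ⟨c+2, by omega⟩ i) q
  else if (finProdFinEquiv.symm p).1.val = j then
    ind (enc c d ⟨c+1, by omega⟩ i) q - ind (enc c d ⟨c+2, by omega⟩ i) q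
  else if (finProdFinEquiv.symm p).1.val ≤ c then
    ind (enc c d (finProdFinEquiv.symm p).1 i) q
  else 0

def Omat (c d : ℕ) : Fin (c*d) → Fin ((c+3)*d) → ℝ := fun p q =>
  ind (enc c d ⟨c - ((finProdFinEquiv.symm p).1 : Fin c).val, by omega⟩
    (finProdFinEquiv.symm p).2) q

-- row sums
lemma Emat_row (c d : ℕ) (s : Fin (c+3)) (i : Fin d) (x : Fin d → ℝ) :
    ∑ i', Emat c d (enc c d s i) i' * x i' = if s.val = 0 then x i else 0 := by
  simp only [Emat, enc_symm]
  split
  · exact sum_ind_mul i x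
  · simp

lemma Amat_row (c d : ℕ) (ε : ℝ) (s : Fin (c+3)) (i : Fin d) (v : Fin ((c+3)*d) → ℝ) :
    ∑ q, Amat c d ε (enc c d s i) q * v q =
      if c + 1 ≤ s.val then (1/(2*ε)) * v (enc c d ⟨0, by omega⟩ i)
      else v (enc c d s i) := by
  simp only [Amat, enc_symm]
  split
  · rw [← sum_ind_mul (enc c d ⟨0, by omega⟩ i) v, Finset.mul_sum]
    congr 1; ext q; ring
  · exact sum_ind_mul _ v

lemma Bmat_row (c d j : ℕ) (s : Fin (c+3)) (i : Fin d) (v : Fin ((c+3)*d) → ℝ) :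
    ∑ q, Bmat c d j (enc c d s i) q * v q =
      if s.val = 0 then
        2 * v (enc c d ⟨0, by omega⟩ i) - v (enc c d ⟨c+1, by omega⟩ i)
          + v (enc c d ⟨c+2, by omega⟩ i)
      else if s.val = j then
        v (enc c d ⟨c+1, by omega⟩ i) - v (enc c d ⟨c+2, by omega⟩ i)
      else if s.val ≤ c then v (enc c d s i)
      else 0 := by
  simp only [Bmat, enc_symm]
  split
  · simp only [sub_mul, add_mul, mul_assoc, Finset.sum_add_distrib, Finset.sum_sub_distrib,
      ← Finset.mul_sum, sum_ind_mul]
  · split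
    · simp only [sub_mul, Finset.sum_sub_distrib, sum_ind_mul]
    · split
      · exact sum_ind_mul _ v
      · simp

lemma Omat_row (c d : ℕ) (p : Fin (c*d)) (v : Fin ((c+3)*d) → ℝ) :
    ∑ q, Omat c d p q * v q =
      v (enc c d ⟨c - ((finProdFinEquiv.symm p).1 : Fin c).val, by omega⟩
        (finProdFinEquiv.symm p).2) := sum_ind_mul _ v

-- the network
def midNet (c d : ℕ) (ε : ℝ) : ℕ → ℕ → Net ((c+3)*d) (c*d)
  | 0, _ => .last (Omat c d) 0
  | (r+1), s => .layer (Amat c d ε) (Abias c d ε) (.layer (Bmat c d (s+1)) 0 (midNet c d ε r (s+1)))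

def fullNet (c d : ℕ) (ε : ℝ) : Net d (c*d) := .layer (Emat c d) 0 (midNet c d ε c 0)

lemma midNet_size (c d : ℕ) (ε : ℝ) : ∀ r s, (midNet c d ε r s).size = 2*r*((c+3)*d) + c*d := by
  intro r
  induction r with
  | zero => intro s; simp [midNet, Net.size]
  | succ r ih => intro s; simp [midNet, Net.size, ih]; ring

lemma fullNet_size (c d : ℕ) (ε : ℝ) :
    (fullNet c d ε).size = (c+3)*d + (2*c*((c+3)*d) + c*d) := by
  simp [fullNet, Net.size, midNet_size]

-- the state vector: the invariant carried between stages
def stateVec (c d : ℕ) (x : Fin d → ℝ) (s : ℕ) : Fin ((c+3)*d) → ℝ := fun q =>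
  if (finProdFinEquiv.symm q).1.val = 0 then Tt c s (x (finProdFinEquiv.symm q).2)
  else if (finProdFinEquiv.symm q).1.val ≤ s ∧ (finProdFinEquiv.symm q).1.val ≤ c then
    ((bitv c ((finProdFinEquiv.symm q).1.val - 1) (x (finProdFinEquiv.symm q).2) : ℕ) : ℝ)
  else 0

lemma stateVec_enc (c d : ℕ) (x : Fin d → ℝ) (s : ℕ) (sl : Fin (c+3)) (i : Fin d) :
    stateVec c d x s (enc c d sl i) =
      if sl.val = 0 then Tt c s (x i)
      else if sl.val ≤ s ∧ sl.val ≤ c then ((bitv c (sl.val - 1) (x i) : ℕ) : ℝ)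
      else 0 := by
  simp only [stateVec, enc_symm]

lemma stage_step (c d : ℕ) (ε : ℝ) (hε : 0 < ε) (x : Fin d → ℝ)
    (hx : ∀ i, Good c ε (x i)) (s : ℕ) (hs : s < c) (p : Fin ((c+3)*d)) :
    relu ((∑ q, Bmat c d (s+1) p q *
        relu ((∑ q', Amat c d ε q q' * stateVec c d x s q') + Abias c d ε q)) + 0)
      = stateVec c d x (s+1) p := by
  set v := stateVec c d x s with hv
  -- values of the A-layer output
  have hw0 : ∀ i : Fin d,
      relu ((∑ q', Amat c d ε (enc c d ⟨0, by omega⟩ i) q' * v q')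
        + Abias c d ε (enc c d ⟨0, by omega⟩ i)) = Tt c s (x i) := by
    intro i
    simp only [Amat_row, Abias, enc_symm]
    rw [if_neg (by omega), if_neg (by omega), if_neg (by omega)]
    rw [hv, stateVec_enc, if_pos rfl, add_zero]
    exact max_eq_right (Tt_nonneg c s (le_of_lt hs) (hx i).1)
  have hvnonneg : ∀ (sl : Fin (c+3)) (i : Fin d), sl.val ≠ 0 → 0 ≤ v (enc c d sl i) := by
    intro sl i hsl
    rw [hv, stateVec_enc, if_neg hsl]
    split
    · exact Nat.cast_nonneg _
    · exact le_rfl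
  have hwbit : ∀ (sl : Fin (c+3)) (i : Fin d), 1 ≤ sl.val → sl.val ≤ c →
      relu ((∑ q', Amat c d ε (enc c d sl i) q' * v q') + Abias c d ε (enc c d sl i))
        = v (enc c d sl i) := by
    intro sl i h1 h2
    simp only [Amat_row, Abias, enc_symm]
    rw [if_neg (by omega), if_neg (by omega), if_neg (by omega), add_zero]
    exact max_eq_right (hvnonneg sl i (by omega))
  have hwu : ∀ i : Fin d,
      relu ((∑ q', Amat c d ε (enc c d ⟨c+1, by omega⟩ i) q' * v q')
        + Abias c d ε (enc c d ⟨c+1, by omega⟩ i))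
      = relu ((Tt c s (x i) - 1/2 + ε)/(2*ε)) := by
    intro i
    have h0v : v (enc c d ⟨0, by omega⟩ i) = Tt c s (x i) := by
      rw [hv, stateVec_enc, if_pos rfl]
    simp only [Amat_row, Abias, enc_symm, h0v]
    norm_num
    congr 1
    field_simp
    ring
  have hwv : ∀ i : Fin d,
      relu ((∑ q', Amat c d ε (enc c d ⟨c+2, by omega⟩ i) q' * v q')
        + Abias c d ε (enc c d ⟨c+2, by omega⟩ i))
      = relu ((Tt c s (x i) - 1/2 + ε)/(2*ε) - 1) := by
    intro i
    have h0v : v (enc c d ⟨0, by omega⟩ i) = Tt c s (x i) := by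
      rw [hv, stateVec_enc, if_pos rfl]
    simp only [Amat_row, Abias, enc_symm, h0v]
    norm_num
    congr 1
    field_simp
    ring
  -- the threshold is computed exactly on good inputs
  have hkey : ∀ i : Fin d,
      relu ((Tt c s (x i) - 1/2 + ε)/(2*ε)) - relu ((Tt c s (x i) - 1/2 + ε)/(2*ε) - 1)
      = ((bitv c s (x i) : ℕ) : ℝ) := by
    intro i
    have hth := Tt_threshold c s hs hε (hx i)
    have hb : bitv c s (x i) = 0 ∨ bitv c s (x i) = 1 := by unfold bitv; omega
    rcases hb with hb | hb
    · rw [hb]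
      have hT := hth.2 hb
      have h1 : (Tt c s (x i) - 1/2 + ε)/(2*ε) ≤ 0 :=
        div_nonpos_of_nonpos_of_nonneg (by linarith) (by linarith)
      simp only [relu]
      rw [max_eq_left h1, max_eq_left (by linarith)]
      norm_num
    · rw [hb]
      have hT := hth.1 hb
      have h1 : 1 ≤ (Tt c s (x i) - 1/2 + ε)/(2*ε) := by
        rw [le_div_iff₀ (by linarith)]
        linarith
      simp only [relu]
      rw [max_eq_right (by linarith), max_eq_right (by linarith)]
      norm_num
  -- now compute the B layer output at p
  obtain ⟨⟨sl, i⟩, rfl⟩ := finProdFinEquiv.surjective p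
  have hpe : finProdFinEquiv (sl, i) = enc c d sl i := rfl
  rw [hpe, Bmat_row, add_zero, stateVec_enc]
  by_cases h0 : sl.val = 0
  · rw [if_pos h0, if_pos h0]
    have hTnn := Tt_nonneg c (s+1) (by omega) (hx i).1
    have hTs := Tt_succ c s hs (x i)
    have hcomb : 2 * relu ((∑ q', Amat c d ε (enc c d ⟨0, by omega⟩ i) q' * v q')
          + Abias c d ε (enc c d ⟨0, by omega⟩ i))
        - relu ((∑ q', Amat c d ε (enc c d ⟨c+1, by omega⟩ i) q' * v q')
          + Abias c d ε (enc c d ⟨c+1, by omega⟩ i))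
        + relu ((∑ q', Amat c d ε (enc c d ⟨c+2, by omega⟩ i) q' * v q')
          + Abias c d ε (enc c d ⟨c+2, by omega⟩ i)) = Tt c (s+1) (x i) := by
      rw [hw0, hwu, hwv]
      have h1 := hkey i
      linarith
    rw [hcomb]
    exact max_eq_right hTnn
  · rw [if_neg h0, if_neg h0]
    by_cases hj : sl.val = s + 1
    · rw [if_pos hj, if_pos (by constructor <;> omega)]
      rw [hwu, hwv, hkey i, hj]
      simp only [Nat.add_sub_cancel]
      exact max_eq_right (Nat.cast_nonneg _)
    · rw [if_neg hj]
      by_cases hc' : sl.val ≤ c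
      · rw [if_pos hc', hwbit sl i (by omega) hc']
        rw [hv, stateVec_enc, if_neg h0]
        by_cases hss : sl.val ≤ s
        · rw [if_pos ⟨hss, hc'⟩, if_pos ⟨by omega, hc'⟩]
          exact max_eq_right (Nat.cast_nonneg _)
        · rw [if_neg (by intro h; exact hss (by omega)), if_neg (by intro h; omega)]
          exact max_eq_right le_rfl
      · rw [if_neg hc', if_neg (by intro h; exact hc' h.2)]
        exact max_eq_right le_rfl

lemma bitv_eq_bitRep (c : ℕ) (t : ℝ) (j : Fin c) :
    ((bitv c (c - 1 - j.val) t : ℕ) : ℝ) = bitRep c t j := by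
  have hj := j.isLt
  have h1 : c - (c - 1 - j.val) - 1 = j.val := by omega
  unfold bitv bitRep
  rw [h1]
  have hmin : min (⌊(2:ℝ) ^ c * t⌋.toNat) (2 ^ c - 1) = kk c t := rfl
  rw [hmin, Nat.testBit_eq_decide_div_mod_eq]
  rcases Nat.mod_two_eq_zero_or_one (kk c t / 2 ^ j.val) with h | h <;> simp [h]

lemma midNet_eval (c d : ℕ) (ε : ℝ) (hε : 0 < ε) (x : Fin d → ℝ) (hx : ∀ i, Good c ε (x i)) :
    ∀ r s, s + r = c →
      ∀ p, (midNet c d ε r s).eval relu (stateVec c d x s) p = binc c d x p := by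
  intro r
  induction r with
  | zero =>
    intro s hsc p
    have hsc' : s = c := by omega
    subst hsc'
    show (∑ q, Omat s d p q * stateVec s d x s q) + 0 = binc s d x p
    rw [add_zero, Omat_row, stateVec_enc]
    simp only [binc]
    have hjlt := ((finProdFinEquiv.symm p).1 : Fin s).isLt
    rw [if_neg (by omega), if_pos (by constructor <;> omega)]
    rw [show (⟨s - ((finProdFinEquiv.symm p).1 : Fin s).val, by omega⟩ : Fin (s+3)).val - 1
        = s - 1 - ((finProdFinEquiv.symm p).1 : Fin s).val from by simp; omega]
    exact bitv_eq_bitRep s _ _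
  | succ r ih =>
    intro s hsc p
    have hstep : (fun m => relu ((∑ q, Bmat c d (s+1) m q *
        relu ((∑ q', Amat c d ε q q' * stateVec c d x s q') + Abias c d ε q)) + 0))
        = stateVec c d x (s+1) :=
      funext (fun m => stage_step c d ε hε x hx s (by omega) m)
    show (midNet c d ε r (s+1)).eval relu
      (fun m => relu ((∑ q, Bmat c d (s+1) m q *
        relu ((∑ q', Amat c d ε q q' * stateVec c d x s q') + Abias c d ε q)) + 0)) p
      = binc c d x p
    rw [hstep]
    exact ih (s+1) (by omega) p

lemma fullNet_eval (c d : ℕ) (hc : 1 ≤ c) (ε : ℝ) (hε : 0 < ε) (x : Fin d → ℝ)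
    (hx : ∀ i, Good c ε (x i)) (p : Fin (c*d)) :
    (fullNet c d ε).eval relu x p = binc c d x p := by
  have h0 : (fun m => relu ((∑ i', Emat c d m i' * x i') + 0)) = stateVec c d x 0 := by
    funext q
    obtain ⟨⟨sl, i⟩, rfl⟩ := finProdFinEquiv.surjective q
    have hpe : finProdFinEquiv (sl, i) = enc c d sl i := rfl
    rw [hpe, Emat_row, add_zero, stateVec_enc]
    by_cases h : sl.val = 0
    · rw [if_pos h, if_pos h, Tt_zero c hc]
      exact max_eq_right (hx i).1.1
    · rw [if_neg h, if_neg h, if_neg (by intro hh; omega)]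
      exact max_eq_right le_rfl
  show (midNet c d ε c 0).eval relu (fun m => relu ((∑ i', Emat c d m i' * x i') + 0)) p
    = binc c d x p
  rw [h0]
  exact midNet_eval c d ε hε x hx c 0 (by omega) p

/-- there is a universal constant `C` such that the following holds. Let
`μ` be a probability distribution on `[0,1]^d` whose one-dimensional marginals have
densities bounded by `M`. For every `c ≥ 1` and every `δ > 0` there exists a ReLU
network `N : ℝ^d → ℝ^{c·d}` of size at most `C·d·c²` such that
`Pr_{x∼μ}[N(x) = bin_c(x)] ≥ 1 − δ`. -/
theorem binary_extraction_size_dc_sq :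
    ∃ C : ℝ, 0 < C ∧
      ∀ (d : ℕ) (M : ℝ) (μ : Measure (Fin d → ℝ)),
        IsProbabilityMeasure μ →
        μ {x | ∀ i, x i ∈ Set.Icc (0:ℝ) 1} = 1 →
        (∀ i : Fin d, ∀ s : Set ℝ, MeasurableSet s →
          μ.map (fun x => x i) s ≤ ENNReal.ofReal M * volume s) →
        ∀ (c : ℕ), 1 ≤ c → ∀ δ : ℝ, 0 < δ →
          ∃ N : Net d (c * d), (N.size : ℝ) ≤ C * d * c ^ 2 ∧
            ENNReal.ofReal (1 - δ) ≤ μ {x | ∀ p, N.eval relu x p = binc c d x p} := by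
  refine ⟨13, by norm_num, ?_⟩
  intro d M μ hprob hcube hmarg c hc δ hδ
  set M' : ℝ := max M 1 with hM'def
  have hM'1 : (1:ℝ) ≤ M' := le_max_right _ _
  have hM'0 : (0:ℝ) < M' := lt_of_lt_of_le one_pos hM'1
  have hden : (0:ℝ) < ((d:ℝ)+1) * M' * 2^(c+1) := by positivity
  set ε : ℝ := δ / (((d:ℝ)+1) * M' * 2^(c+1)) with hεdef
  have hε : 0 < ε := div_pos hδ hden
  refine ⟨fullNet c d ε, ?_, ?_⟩
  · -- size bound
    rw [fullNet_size]
    have hc1 : (1:ℝ) ≤ (c:ℝ) := by exact_mod_cast hc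
    have hd0 : (0:ℝ) ≤ (d:ℝ) := Nat.cast_nonneg d
    have hc0 : (0:ℝ) ≤ (c:ℝ) := by linarith
    push_cast
    nlinarith [mul_nonneg hd0 (mul_nonneg hc0 (sub_nonneg.2 hc1)),
      mul_nonneg hd0 (sub_nonneg.2 hc1)]
  · -- probability bound
    set Bad : Set ℝ :=
      ⋃ ℓ ∈ Finset.Icc (1:ℕ) (2^c - 1), Set.Ioo ((ℓ:ℝ)/2^c - ε) ((ℓ:ℝ)/2^c + ε) with hBadDef
    have hBadMeas : MeasurableSet Bad :=
      (Finset.Icc (1:ℕ) (2^c-1)).measurableSet_biUnion (fun ℓ _ => measurableSet_Ioo)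
    have hvolBad : volume Bad ≤ ENNReal.ofReal (2^(c+1) * ε) := by
      calc volume Bad ≤ ∑ ℓ ∈ Finset.Icc (1:ℕ) (2^c-1),
            volume (Set.Ioo ((ℓ:ℝ)/2^c - ε) ((ℓ:ℝ)/2^c + ε)) :=
            measure_biUnion_finset_le _ _
        _ = ∑ ℓ ∈ Finset.Icc (1:ℕ) (2^c-1), ENNReal.ofReal (2*ε) := by
            refine Finset.sum_congr rfl (fun ℓ _ => ?_)
            rw [Real.volume_Ioo]
            congr 1
            ring
        _ = ((Finset.Icc (1:ℕ) (2^c-1)).card : ℝ≥0∞) * ENNReal.ofReal (2*ε) := by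
            rw [Finset.sum_const, nsmul_eq_mul]
        _ ≤ ((2^c : ℕ) : ℝ≥0∞) * ENNReal.ofReal (2*ε) :=
            mul_le_mul_left ((Nat.cast_le (α := ℝ≥0∞)).2
              (show (Finset.Icc (1:ℕ) (2^c-1)).card ≤ 2^c by rw [Nat.card_Icc, Nat.add_sub_cancel]; exact Nat.sub_le _ _)) _
        _ = ENNReal.ofReal ((2^c : ℕ) * (2*ε)) := by
            rw [← ENNReal.ofReal_natCast, ← ENNReal.ofReal_mul (Nat.cast_nonneg _)]
        _ = ENNReal.ofReal (2^(c+1) * ε) := by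
            congr 1
            push_cast
            ring
    have hmargBad : ∀ i : Fin d, μ {x | x i ∈ Bad}
        ≤ ENNReal.ofReal (M' * (2^(c+1) * ε)) := by
      intro i
      have h1 := hmarg i Bad hBadMeas
      rw [Measure.map_apply (measurable_pi_apply i) hBadMeas] at h1
      calc μ {x | x i ∈ Bad} = μ ((fun x => x i) ⁻¹' Bad) := rfl
        _ ≤ ENNReal.ofReal M * volume Bad := h1
        _ ≤ ENNReal.ofReal M' * ENNReal.ofReal (2^(c+1) * ε) :=
            mul_le_mul' (ENNReal.ofReal_le_ofReal (le_max_left _ _)) hvolBad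
        _ = ENNReal.ofReal (M' * (2^(c+1) * ε)) := by
            rw [← ENNReal.ofReal_mul (le_of_lt hM'0)]
    set Cube : Set (Fin d → ℝ) := {x | ∀ i, x i ∈ Set.Icc (0:ℝ) 1} with hCubeDef
    have hCubeMeas : MeasurableSet Cube := by
      have : Cube = ⋂ i, (fun x : Fin d → ℝ => x i) ⁻¹' Set.Icc (0:ℝ) 1 := by
        ext x; simp [hCubeDef, Set.mem_iInter]
      rw [this]
      exact MeasurableSet.iInter (fun i => (measurable_pi_apply i) measurableSet_Icc)
    set G : Set (Fin d → ℝ) := Cube ∩ ⋂ i, {x | x i ∉ Bad} with hGdef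
    have hGgood : ∀ x ∈ G, ∀ i, Good c ε (x i) := by
      intro x hx i
      obtain ⟨hx1, hx2⟩ := hx
      refine ⟨hx1 i, ?_⟩
      intro ℓ hℓ1 hℓ2
      have hxB : x i ∉ Bad := by
        have := Set.mem_iInter.1 hx2 i
        exact this
      have hnot : x i ∉ Set.Ioo ((ℓ:ℝ)/2^c - ε) ((ℓ:ℝ)/2^c + ε) := by
        intro hmem
        exact hxB (Set.mem_biUnion (Finset.mem_Icc.2 ⟨hℓ1, hℓ2⟩) hmem)
      rw [Set.mem_Ioo, not_and_or, not_lt, not_lt] at hnot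
      rcases hnot with h | h
      · exact le_abs.2 (Or.inr (by linarith))
      · exact le_abs.2 (Or.inl (by linarith))
    have hGcomp : μ Gᶜ ≤ ENNReal.ofReal δ := by
      have hsplit : Gᶜ ⊆ Cubeᶜ ∪ ⋃ i, {x : Fin d → ℝ | x i ∈ Bad} := by
        intro x hx
        rw [hGdef, Set.compl_inter] at hx
        rcases hx with h | h
        · exact Or.inl h
        · rw [Set.compl_iInter] at h
          obtain ⟨si, ⟨i, rfl⟩, hsi⟩ := h
          refine Or.inr (Set.mem_iUnion.2 ⟨i, ?_⟩)
          simpa using hsi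
      have hcubec : μ Cubeᶜ = 0 := by
        rw [measure_compl hCubeMeas (measure_ne_top μ _)]
        rw [show μ Cube = 1 from hcube]
        simp
      calc μ Gᶜ ≤ μ (Cubeᶜ ∪ ⋃ i, {x : Fin d → ℝ | x i ∈ Bad}) := measure_mono hsplit
        _ ≤ μ Cubeᶜ + μ (⋃ i, {x : Fin d → ℝ | x i ∈ Bad}) := measure_union_le _ _
        _ ≤ 0 + ∑ i : Fin d, μ {x : Fin d → ℝ | x i ∈ Bad} := by
            rw [hcubec]
            gcongr
            exact measure_iUnion_fintype_le μ _
        _ ≤ ∑ i : Fin d, ENNReal.ofReal (M' * (2^(c+1) * ε)) := by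
            rw [zero_add]
            exact Finset.sum_le_sum (fun i _ => hmargBad i)
        _ = ((d:ℕ) : ℝ≥0∞) * ENNReal.ofReal (M' * (2^(c+1) * ε)) := by
            rw [Finset.sum_const, nsmul_eq_mul, Finset.card_univ, Fintype.card_fin]
        _ = ENNReal.ofReal ((d:ℝ) * (M' * (2^(c+1) * ε))) := by
            rw [← ENNReal.ofReal_natCast, ← ENNReal.ofReal_mul (Nat.cast_nonneg _)]
        _ ≤ ENNReal.ofReal δ := by
            apply ENNReal.ofReal_le_ofReal
            have heq : (d:ℝ) * (M' * (2^(c+1) * ε)) = ((d:ℝ) * M' * 2^(c+1)) * ε := by ring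
            rw [heq, hεdef]
            rw [mul_div_assoc'] at *
            calc (d:ℝ) * M' * 2^(c+1) * δ / (((d:ℝ)+1) * M' * 2^(c+1))
                ≤ (((d:ℝ)+1) * M' * 2^(c+1)) * δ / (((d:ℝ)+1) * M' * 2^(c+1)) := by
                  gcongr <;>
                  nlinarith [mul_pos hM'0 (pow_pos (show (0:ℝ)<2 by norm_num) (c+1)),
                    le_of_lt hδ, Nat.cast_nonneg (α := ℝ) d]
              _ = δ := by field_simp
    have hGsub : G ⊆ {x | ∀ p, (fullNet c d ε).eval relu x p = binc c d x p} := by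
      intro x hx p
      exact fullNet_eval c d hc ε hε x (hGgood x hx) p
    have h1le : (1:ℝ≥0∞) ≤ μ G + ENNReal.ofReal δ := by
      calc (1:ℝ≥0∞) = μ Set.univ := (measure_univ).symm
        _ = μ (G ∪ Gᶜ) := by rw [Set.union_compl_self]
        _ ≤ μ G + μ Gᶜ := measure_union_le _ _
        _ ≤ μ G + ENNReal.ofReal δ := by gcongr
    calc ENNReal.ofReal (1 - δ) = ENNReal.ofReal 1 - ENNReal.ofReal δ :=
          ENNReal.ofReal_sub 1 (le_of_lt hδ)
      _ = 1 - ENNReal.ofReal δ := by rw [ENNReal.ofReal_one]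
      _ ≤ μ G := tsub_le_iff_right.2 h1le
      _ ≤ μ {x | ∀ p, (fullNet c d ε).eval relu x p = binc c d x p} := measure_mono hGsub


end
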